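/- Let p ≠ 2, 3 and let G = P ⋊ S₃ be the profinite group constructed from P ⊆ Γ(ℤ_p⟦X₁,…,X₄,Y₁,…,Y₄⟧) as the closed subgroup generated by the S₃-conjugates of X = 1+(Xᵢ) and Y = 1+(Yᵢ), with ρ̄ : G ↠ S₃ → GL₂(𝔽_p) the composition of the projection with the standard representation. Then dim_{𝔽_p} H¹(G, Ad(ρ̄)) = 8. -/

import Mathlib

open Matrix IsLocalRing

instance (p : ℕ) : TopologicalSpace (ZMod p) := ⊥
instance (p : ℕ) : DiscreteTopology (ZMod p) := ⟨rfl⟩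

instance : TopologicalSpace (Equiv.Perm (Fin 3)) := ⊥
instance : DiscreteTopology (Equiv.Perm (Fin 3)) := ⟨rfl⟩

instance (p : ℕ) : DiscreteTopology (Matrix (Fin 2) (Fin 2) (ZMod p)) :=
  inferInstanceAs (DiscreteTopology (Fin 2 → Fin 2 → ZMod p))

/-- The product topology on a semidirect product. -/
instance {N G : Type} [Group N] [Group G] {φ : G →* MulAut N} [TopologicalSpace N]
    [TopologicalSpace G] : TopologicalSpace (N ⋊[φ] G) :=
  TopologicalSpace.induced (fun x => (x.left, x.right)) inferInstance

/-- The adjoint representation attached to a homomorphism `ρ : G → GL₂(k)`: `G` acts on the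
`2×2` matrices `M₂(k)` by conjugation, `g • A = ρ g * A * (ρ g)⁻¹`. -/
def adGL {k G : Type} [CommRing k] [Group G] (ρ : G →* GL (Fin 2) k) :
    Representation k G (Matrix (Fin 2) (Fin 2) k) where
  toFun g :=
    { toFun := fun A => (ρ g : Matrix (Fin 2) (Fin 2) k) * A * ((ρ g)⁻¹ : GL (Fin 2) k)
      map_add' := fun A B => by simp [Matrix.add_mul, Matrix.mul_add]
      map_smul' := fun c A => by simp [Matrix.smul_mul, Matrix.mul_smul] }
  map_one' := by ext A <;> simp
  map_mul' g h := by
    ext A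
    simp [_root_.mul_inv_rev, Units.val_mul, mul_assoc]

section ContinuousCohomology
set_option linter.unusedSectionVars false
section ContinuousCohomology

set_option linter.unusedSectionVars false

variable {p : ℕ} (G : Type) [Group G] [TopologicalSpace G]
  (M : Type) [AddCommGroup M] [Module (ZMod p) M] [TopologicalSpace M] [DiscreteTopology M]
  (ρ : Representation (ZMod p) G M)

/-- The differential on continuous inhomogeneous cochains of a topological group with
coefficients in a representation. -/
def dmap (n : ℕ) (f : (Fin n → G) → M) : (Fin (n + 1) → G) → M := fun g =>
  ρ (g 0) (f fun i => g i.succ)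
    + ∑ i : Fin n, ((-1 : ZMod p) ^ ((i : ℕ) + 1)) •
        f (fun j => if (j : ℕ) < (i : ℕ) then g j.castSucc
          else if (j : ℕ) = (i : ℕ) then g j.castSucc * g j.succ
          else g j.succ)
    + ((-1 : ZMod p) ^ (n + 1)) • f (fun j => g j.castSucc)

lemma dmap_add (n : ℕ) (f h : (Fin n → G) → M) :
    dmap G M ρ n (f + h) = dmap G M ρ n f + dmap G M ρ n h := by
  funext g
  simp only [dmap, Pi.add_apply, _root_.map_add, smul_add, Finset.sum_add_distrib]
  abel

lemma dmap_smul (n : ℕ) (c : ZMod p) (f : (Fin n → G) → M) :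
    dmap G M ρ n (c • f) = c • dmap G M ρ n f := by
  funext g
  simp only [dmap, Pi.smul_apply, _root_.map_smul, smul_add, smul_comm _ c]
  rw [Finset.smul_sum]

lemma dmap_zero (n : ℕ) : dmap G M ρ n (0 : (Fin n → G) → M) = 0 := by
  funext g; simp [dmap]

/-- The submodule of continuous `n`-cocycles. -/
def cocycles (n : ℕ) : Submodule (ZMod p) ((Fin n → G) → M) where
  carrier := {f | Continuous f ∧ dmap G M ρ n f = 0}
  add_mem' := fun {f h} hf hh =>
    ⟨hf.1.add hh.1, by rw [dmap_add, hf.2, hh.2, add_zero]⟩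
  zero_mem' := ⟨continuous_const, dmap_zero G M ρ n⟩
  smul_mem' := fun c f hf =>
    ⟨(continuous_of_discreteTopology (α := M)).comp hf.1,
      by rw [dmap_smul, hf.2, smul_zero]⟩

/-- The submodule of continuous `n`-coboundaries (zero in degree 0). -/
def coboundaries : (n : ℕ) → Submodule (ZMod p) ((Fin n → G) → M)
  | 0 => ⊥
  | (n + 1) =>
    { carrier := {f | ∃ h : (Fin n → G) → M, Continuous h ∧ dmap G M ρ n h = f}
      add_mem' := by
        rintro f f' ⟨h, hc, hd⟩ ⟨h', hc', hd'⟩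
        exact ⟨h + h', hc.add hc', by rw [dmap_add, hd, hd']⟩
      zero_mem' := ⟨0, continuous_const, dmap_zero G M ρ n⟩
      smul_mem' := by
        rintro c f ⟨h, hc, hd⟩
        exact ⟨c • h, (continuous_of_discreteTopology (α := M)).comp hc,
          by rw [dmap_smul, hd]⟩ }

/-- Continuous group cohomology in degree `n`, defined via continuous inhomogeneous cochains:
continuous cocycles modulo coboundaries of continuous cochains. -/
abbrev Hcont (n : ℕ) :=
  cocycles G M ρ n ⧸ ((coboundaries G M ρ n).comap (cocycles G M ρ n).subtype)

end ContinuousCohomology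

-- test usage with trivial rep on ZMod p
end ContinuousCohomology

noncomputable section

/-- The lift of `σ` to `GL₂` of the power series ring `ℛ = ℤ_p⟦X₁,…,Y₄⟧`, via constant power
series. -/
def sigmaRcal (p : ℕ) [Fact p.Prime] (σZ : Equiv.Perm (Fin 3) →* GL (Fin 2) ℤ_[p]) :
    Equiv.Perm (Fin 3) →* GL (Fin 2) (MvPowerSeries (Fin 8) ℤ_[p]) :=
  (Matrix.GeneralLinearGroup.map (MvPowerSeries.C (σ := Fin 8) (R := ℤ_[p]))).comp σZ

namespace Stmt16Aux

open MvPowerSeries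

section Bridge

variable {p : ℕ} (G : Type) [Group G] [TopologicalSpace G]
  (M : Type) [AddCommGroup M] [Module (ZMod p) M] [TopologicalSpace M] [DiscreteTopology M]
  (ρ : Representation (ZMod p) G M)

lemma dmap_one_apply (f : (Fin 1 → G) → M) (g : Fin 2 → G) :
    dmap G M ρ 1 f g =
      ρ (g 0) (f fun _ => g 1) - f (fun _ => g 0 * g 1) + f (fun _ => g 0) := by
  have h1 : (fun i : Fin 1 => g i.succ) = fun _ => g 1 := funext fun j => by
    rw [Subsingleton.elim j 0]; exact congrArg g (by decide)
  have h3 : (fun j : Fin 1 => g j.castSucc) = fun _ => g 0 := funext fun j => by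
    rw [Subsingleton.elim j 0]; exact congrArg g (by decide)
  have h2 : (fun j : Fin 1 => if (j : ℕ) < (((0 : Fin 1) : ℕ)) then g j.castSucc
      else if (j : ℕ) = (((0 : Fin 1) : ℕ)) then g j.castSucc * g j.succ
      else g j.succ) = fun _ : Fin 1 => g 0 * g 1 := funext fun j => by
    rw [Subsingleton.elim j 0]
    rw [if_neg (lt_irrefl _), if_pos rfl]
    exact congrArg₂ (· * ·) (congrArg g (by decide)) (congrArg g (by decide))
  rw [dmap, Fin.sum_univ_one, h1, h3, h2]
  have e1 : ((-1 : ZMod p)) ^ ((((0 : Fin 1) : ℕ)) + 1) = -1 := by norm_num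
  have e2 : ((-1 : ZMod p)) ^ (1 + 1) = 1 := by norm_num
  rw [e1, e2, one_smul, neg_one_smul]
  abel

lemma dmap_zero_apply (h : (Fin 0 → G) → M) (g : Fin 1 → G) :
    dmap G M ρ 0 h g = ρ (g 0) (h fun i => i.elim0) - h (fun i => i.elim0) := by
  have hh : ∀ z : Fin 0 → G, z = fun i => i.elim0 := fun z => funext fun i => i.elim0
  rw [dmap]
  rw [show (fun i : Fin 0 => g i.succ) = (fun i : Fin 0 => i.elim0) from hh _,
    show (fun j : Fin 0 => g j.castSucc) = (fun i : Fin 0 => i.elim0) from hh _]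
  simp [sub_eq_add_neg]

end Bridge

lemma adGL_apply {k G : Type} [CommRing k] [Group G] (ρ : G →* GL (Fin 2) k) (x : G)
    (A : Matrix (Fin 2) (Fin 2) k) :
    adGL ρ x A = (ρ x : Matrix (Fin 2) (Fin 2) k) * A *
      (((ρ x)⁻¹ : GL (Fin 2) k) : Matrix (Fin 2) (Fin 2) k) := rfl

section PowerSeries

variable (p : ℕ) [Fact p.Prime]

/-- Reduction of constant coefficients mod `p`. -/
def pizero : MvPowerSeries (Fin 8) ℤ_[p] →+* ZMod p :=
  (PadicInt.toZMod).comp (constantCoeff (σ := Fin 8) (R := ℤ_[p]))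

/-- Reduction of a `GL₂` element over the power series ring to `M₂(𝔽_p)`. -/
def Pzero (u : GL (Fin 2) (MvPowerSeries (Fin 8) ℤ_[p])) : Matrix (Fin 2) (Fin 2) (ZMod p) :=
  (pizero p).mapMatrix (u : Matrix (Fin 2) (Fin 2) (MvPowerSeries (Fin 8) ℤ_[p]))

/-- The `i`-th degree-one coefficient slice of a `GL₂` element, reduced mod `p`. -/
def Dsl (i : Fin 8) (u : GL (Fin 2) (MvPowerSeries (Fin 8) ℤ_[p])) :
    Matrix (Fin 2) (Fin 2) (ZMod p) :=
  Matrix.of fun j k => PadicInt.toZMod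
    ((coeff (R := ℤ_[p]) (Finsupp.single i 1))
      ((u : Matrix (Fin 2) (Fin 2) (MvPowerSeries (Fin 8) ℤ_[p])) j k))

lemma coeff_single_mul (i : Fin 8) (f g : MvPowerSeries (Fin 8) ℤ_[p]) :
    coeff (R := ℤ_[p]) (Finsupp.single i 1) (f * g) =
      constantCoeff (σ := Fin 8) (R := ℤ_[p]) f * coeff (R := ℤ_[p]) (Finsupp.single i 1) g +
        coeff (R := ℤ_[p]) (Finsupp.single i 1) f * constantCoeff (σ := Fin 8) (R := ℤ_[p]) g := by
  classical
  rw [coeff_mul, Finsupp.antidiagonal_single, Finset.sum_map,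
    show Finset.HasAntidiagonal.antidiagonal (1 : ℕ) = {(0, 1), (1, 0)} from by decide,
    Finset.sum_pair (by decide)]
  simp [coeff_zero_eq_constantCoeff]

lemma Dsl_mul (i : Fin 8) (u v : GL (Fin 2) (MvPowerSeries (Fin 8) ℤ_[p])) :
    Dsl p i (u * v) = Pzero p u * Dsl p i v + Dsl p i u * Pzero p v := by
  ext j k
  simp only [Dsl, Pzero, Units.val_mul, Matrix.of_apply, Matrix.add_apply, Matrix.mul_apply,
    RingHom.mapMatrix_apply, Matrix.map_apply]
  rw [map_sum, map_sum, ← Finset.sum_add_distrib]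
  refine Finset.sum_congr rfl fun l _ => ?_
  rw [coeff_single_mul, _root_.map_add, _root_.map_mul, _root_.map_mul]
  rfl

lemma Dsl_map_C (i : Fin 8) (v : GL (Fin 2) ℤ_[p]) :
    Dsl p i (Matrix.GeneralLinearGroup.map (C (σ := Fin 8) (R := ℤ_[p])) v) = 0 := by
  classical
  ext j k
  have hval : ((Matrix.GeneralLinearGroup.map (C (σ := Fin 8) (R := ℤ_[p])) v :
      GL (Fin 2) (MvPowerSeries (Fin 8) ℤ_[p])) :
      Matrix (Fin 2) (Fin 2) (MvPowerSeries (Fin 8) ℤ_[p])) j k =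
      C (σ := Fin 8) (R := ℤ_[p]) ((v : Matrix (Fin 2) (Fin 2) ℤ_[p]) j k) := rfl
  simp only [Dsl, Matrix.of_apply, hval, coeff_C, Matrix.zero_apply]
  rw [if_neg (by simp [Finsupp.single_eq_zero]), map_zero]

lemma Pzero_map_C (v : GL (Fin 2) ℤ_[p]) :
    Pzero p (Matrix.GeneralLinearGroup.map (C (σ := Fin 8) (R := ℤ_[p])) v) =
      ((Matrix.GeneralLinearGroup.map (PadicInt.toZMod (p := p)) v : GL (Fin 2) (ZMod p)) :
        Matrix (Fin 2) (Fin 2) (ZMod p)) := by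
  ext j k
  show pizero p (C (σ := Fin 8) (R := ℤ_[p]) ((v : Matrix (Fin 2) (Fin 2) ℤ_[p]) j k)) = _
  simp only [pizero, RingHom.comp_apply, constantCoeff_C]
  rfl

variable (σZ : Equiv.Perm (Fin 3) →* GL (Fin 2) ℤ_[p])
  (ρstd : Equiv.Perm (Fin 3) →* GL (Fin 2) (ZMod p))

lemma sigmaRcal_eq (a : Equiv.Perm (Fin 3)) :
    sigmaRcal p σZ a = Matrix.GeneralLinearGroup.map (C (σ := Fin 8) (R := ℤ_[p])) (σZ a) := rfl

lemma sigmaRcal_inv_eq (a : Equiv.Perm (Fin 3)) :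
    (sigmaRcal p σZ a)⁻¹ = Matrix.GeneralLinearGroup.map (C (σ := Fin 8) (R := ℤ_[p])) ((σZ a)⁻¹) := by
  rw [map_inv, sigmaRcal_eq]

lemma Pzero_sigma (hσlift : (Matrix.GeneralLinearGroup.map (PadicInt.toZMod (p := p))).comp σZ = ρstd) (a : Equiv.Perm (Fin 3)) :
    Pzero p (sigmaRcal p σZ a) =
      ((ρstd a : GL (Fin 2) (ZMod p)) : Matrix (Fin 2) (Fin 2) (ZMod p)) := by
  rw [sigmaRcal_eq, Pzero_map_C, ← hσlift]
  rfl

lemma Pzero_sigma_inv (hσlift : (Matrix.GeneralLinearGroup.map (PadicInt.toZMod (p := p))).comp σZ = ρstd) (a : Equiv.Perm (Fin 3)) :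
    Pzero p ((sigmaRcal p σZ a)⁻¹) =
      (((ρstd a)⁻¹ : GL (Fin 2) (ZMod p)) : Matrix (Fin 2) (Fin 2) (ZMod p)) := by
  rw [sigmaRcal_inv_eq, Pzero_map_C, ← hσlift]
  show ((Matrix.GeneralLinearGroup.map (PadicInt.toZMod (p := p)) ((σZ a)⁻¹) :
      GL (Fin 2) (ZMod p)) : Matrix (Fin 2) (Fin 2) (ZMod p)) = _
  rw [map_inv]
  rfl

lemma Dsl_conj (hσlift : (Matrix.GeneralLinearGroup.map (PadicInt.toZMod (p := p))).comp σZ = ρstd) (i : Fin 8) (a : Equiv.Perm (Fin 3))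
    (u : GL (Fin 2) (MvPowerSeries (Fin 8) ℤ_[p])) :
    Dsl p i (sigmaRcal p σZ a * u * (sigmaRcal p σZ a)⁻¹) =
      ((ρstd a : GL (Fin 2) (ZMod p)) : Matrix (Fin 2) (Fin 2) (ZMod p)) * Dsl p i u *
        (((ρstd a)⁻¹ : GL (Fin 2) (ZMod p)) : Matrix (Fin 2) (Fin 2) (ZMod p)) := by
  rw [Dsl_mul, Dsl_mul, sigmaRcal_eq, Dsl_map_C, ← sigmaRcal_eq p σZ a, sigmaRcal_inv_eq,
    Dsl_map_C, ← sigmaRcal_inv_eq p σZ a, Pzero_sigma p σZ ρstd hσlift,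
    Pzero_sigma_inv p σZ ρstd hσlift]
  simp [add_mul, Matrix.mul_assoc]

/-- Weights encoding a pair of matrices `A`, `B`. -/
def wvec (A B : Matrix (Fin 2) (Fin 2) (ZMod p)) : Fin 8 → ZMod p :=
  ![A 0 0, A 0 1, A 1 0, A 1 1, B 0 0, B 0 1, B 1 0, B 1 1]

/-- The equivariant "derivative" map with prescribed values. -/
def hfun (A B : Matrix (Fin 2) (Fin 2) (ZMod p))
    (u : GL (Fin 2) (MvPowerSeries (Fin 8) ℤ_[p])) : Matrix (Fin 2) (Fin 2) (ZMod p) :=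
  ∑ i : Fin 8, wvec p A B i • Dsl p i u

lemma hfun_mul (A B : Matrix (Fin 2) (Fin 2) (ZMod p))
    (u v : GL (Fin 2) (MvPowerSeries (Fin 8) ℤ_[p]))
    (hu : Pzero p u = 1) (hv : Pzero p v = 1) :
    hfun p A B (u * v) = hfun p A B u + hfun p A B v := by
  simp [hfun, Dsl_mul, hu, hv, smul_add, Finset.sum_add_distrib]
  exact add_comm _ _

lemma hfun_conj (hσlift : (Matrix.GeneralLinearGroup.map (PadicInt.toZMod (p := p))).comp σZ = ρstd) (A B : Matrix (Fin 2) (Fin 2) (ZMod p)) (a : Equiv.Perm (Fin 3))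
    (u : GL (Fin 2) (MvPowerSeries (Fin 8) ℤ_[p])) :
    hfun p A B (sigmaRcal p σZ a * u * (sigmaRcal p σZ a)⁻¹) =
      ((ρstd a : GL (Fin 2) (ZMod p)) : Matrix (Fin 2) (Fin 2) (ZMod p)) * hfun p A B u *
        (((ρstd a)⁻¹ : GL (Fin 2) (ZMod p)) : Matrix (Fin 2) (Fin 2) (ZMod p)) := by
  simp [hfun, Dsl_conj p σZ ρstd hσlift, Finset.mul_sum, Finset.sum_mul,
    Matrix.mul_smul, Matrix.smul_mul]

lemma hfun_X (A B : Matrix (Fin 2) (Fin 2) (ZMod p))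
    (Xu : GL (Fin 2) (MvPowerSeries (Fin 8) ℤ_[p]))
    (hXu : (Xu : Matrix (Fin 2) (Fin 2) (MvPowerSeries (Fin 8) ℤ_[p])) =
      1 + Matrix.of ![![X 0, X 1], ![X 2, X 3]]) :
    hfun p A B Xu = A := by
  classical
  ext j k
  rw [hfun, Matrix.sum_apply]
  simp only [Matrix.smul_apply, Dsl, Matrix.of_apply, hXu, Matrix.add_apply, smul_eq_mul]
  fin_cases j <;> fin_cases k <;>
    · simp [Fin.sum_univ_eight, wvec, Matrix.one_apply, map_add, coeff_X,
        Finsupp.single_left_inj (one_ne_zero (α := ℕ)), MvPowerSeries.coeff_one,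
        Finsupp.single_eq_zero]
      try rfl

lemma hfun_Y (A B : Matrix (Fin 2) (Fin 2) (ZMod p))
    (Yu : GL (Fin 2) (MvPowerSeries (Fin 8) ℤ_[p]))
    (hYu : (Yu : Matrix (Fin 2) (Fin 2) (MvPowerSeries (Fin 8) ℤ_[p])) =
      1 + Matrix.of ![![X 4, X 5], ![X 6, X 7]]) :
    hfun p A B Yu = B := by
  classical
  ext j k
  rw [hfun, Matrix.sum_apply]
  simp only [Matrix.smul_apply, Dsl, Matrix.of_apply, hYu, Matrix.add_apply, smul_eq_mul]
  fin_cases j <;> fin_cases k <;>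
    · simp [Fin.sum_univ_eight, wvec, Matrix.one_apply, map_add, coeff_X,
        Finsupp.single_left_inj (one_ne_zero (α := ℕ)), MvPowerSeries.coeff_one,
        Finsupp.single_eq_zero]
      try rfl

end PowerSeries

section Topology

open Pointwise in
lemma continuous_of_ker_ideal {V : Type} [AddCommGroup V] [TopologicalSpace V]
    [DiscreteTopology V] {R' : Type} [Ring R'] [TopologicalSpace R'] [IsTopologicalRing R']
    (q : R' → V) (hq : ∀ x y, q (x + y) = q x + q y)
    (I : Ideal R') (hI : IsOpen (I : Set R')) (hker : ∀ x ∈ I, q x = 0) :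
    Continuous q := by
  rw [continuous_discrete_rng]
  intro b
  have hset : (q ⁻¹' {b}) = q ⁻¹' {b} + (I : Set R') := by
    apply subset_antisymm
    · intro x hx
      have : x + 0 ∈ q ⁻¹' {b} + (I : Set R') := Set.add_mem_add hx I.zero_mem
      simpa using this
    · intro x hx
      obtain ⟨y, hy, z, hz, rfl⟩ := Set.mem_add.mp hx
      simp only [Set.mem_preimage, Set.mem_singleton_iff] at hy ⊢
      rw [hq, hker z hz, add_zero, hy]
  rw [hset]
  exact hI.add_left

variable (p : ℕ) [Fact p.Prime]
  [TopologicalSpace (MvPowerSeries (Fin 8) ℤ_[p])]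
  [IsTopologicalRing (MvPowerSeries (Fin 8) ℤ_[p])]

lemma pizero_eq_zero_of_mem (x : MvPowerSeries (Fin 8) ℤ_[p])
    (hx : x ∈ maximalIdeal (MvPowerSeries (Fin 8) ℤ_[p])) : pizero p x = 0 := by
  have h1 : ¬ IsUnit x := (IsLocalRing.mem_maximalIdeal x).mp hx
  have h2 : ¬ IsUnit (constantCoeff (σ := Fin 8) (R := ℤ_[p]) x) :=
    fun h => h1 (isUnit_iff_constantCoeff.mpr h)
  have h3 : constantCoeff (σ := Fin 8) (R := ℤ_[p]) x ∈ maximalIdeal ℤ_[p] :=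
    (IsLocalRing.mem_maximalIdeal _).mpr h2
  rw [← PadicInt.ker_toZMod, RingHom.mem_ker] at h3
  exact h3

lemma continuous_pizero (hadic : IsAdic (maximalIdeal (MvPowerSeries (Fin 8) ℤ_[p]))) :
    Continuous (fun x : MvPowerSeries (Fin 8) ℤ_[p] => pizero p x) := by
  have hI : IsOpen ((maximalIdeal (MvPowerSeries (Fin 8) ℤ_[p]) :
      Ideal (MvPowerSeries (Fin 8) ℤ_[p])) : Set (MvPowerSeries (Fin 8) ℤ_[p])) := by
    have := (isAdic_iff.mp hadic).1 1
    rwa [pow_one] at this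
  exact continuous_of_ker_ideal (V := ZMod p) (R' := MvPowerSeries (Fin 8) ℤ_[p])
    (pizero p) (fun x y => map_add _ x y) (maximalIdeal _) hI
    (fun x hx => pizero_eq_zero_of_mem p x hx)

lemma continuous_coeffmod (hadic : IsAdic (maximalIdeal (MvPowerSeries (Fin 8) ℤ_[p])))
    (i : Fin 8) :
    Continuous (fun x : MvPowerSeries (Fin 8) ℤ_[p] =>
      PadicInt.toZMod ((coeff (R := ℤ_[p]) (Finsupp.single i 1)) x)) := by
  have hI :=
    (isAdic_iff.mp hadic).1 2
  refine continuous_of_ker_ideal _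
    (fun x y => by rw [_root_.map_add, _root_.map_add]) _ hI ?_
  intro x hx
  rw [pow_two] at hx
  refine Submodule.mul_induction_on hx ?_ ?_
  · intro f hf g hg
    show PadicInt.toZMod ((coeff (R := ℤ_[p]) (Finsupp.single i 1)) (f * g)) = 0
    have h1 : PadicInt.toZMod (constantCoeff (σ := Fin 8) (R := ℤ_[p]) f) = 0 :=
      pizero_eq_zero_of_mem p f hf
    have h2 : PadicInt.toZMod (constantCoeff (σ := Fin 8) (R := ℤ_[p]) g) = 0 :=
      pizero_eq_zero_of_mem p g hg
    rw [coeff_single_mul, _root_.map_add, _root_.map_mul, _root_.map_mul, h1, h2,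
      zero_mul, mul_zero, add_zero]
  · intro a b ha hb
    show PadicInt.toZMod ((coeff (R := ℤ_[p]) (Finsupp.single i 1)) (a + b)) = 0
    rw [_root_.map_add, _root_.map_add]
    have ha' : PadicInt.toZMod ((coeff (R := ℤ_[p]) (Finsupp.single i 1)) a) = 0 := ha
    have hb' : PadicInt.toZMod ((coeff (R := ℤ_[p]) (Finsupp.single i 1)) b) = 0 := hb
    rw [ha', hb', add_zero]

lemma continuous_entry (j k : Fin 2) :
    Continuous (fun u : GL (Fin 2) (MvPowerSeries (Fin 8) ℤ_[p]) =>
      (u : Matrix (Fin 2) (Fin 2) (MvPowerSeries (Fin 8) ℤ_[p])) j k) := by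
  have h0 : Continuous (fun u : GL (Fin 2) (MvPowerSeries (Fin 8) ℤ_[p]) =>
      (u : Matrix (Fin 2) (Fin 2) (MvPowerSeries (Fin 8) ℤ_[p]))) := Units.continuous_val
  exact (continuous_apply k).comp ((continuous_apply j).comp h0)

lemma continuous_Pzero (hadic : IsAdic (maximalIdeal (MvPowerSeries (Fin 8) ℤ_[p]))) :
    Continuous (Pzero p) :=
  continuous_matrix fun j k => (continuous_pizero p hadic).comp (continuous_entry p j k)

lemma continuous_Dsl (hadic : IsAdic (maximalIdeal (MvPowerSeries (Fin 8) ℤ_[p])))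
    (i : Fin 8) : Continuous (Dsl p i) :=
  continuous_matrix fun j k => (continuous_coeffmod p hadic i).comp (continuous_entry p j k)

lemma continuous_hfun (hadic : IsAdic (maximalIdeal (MvPowerSeries (Fin 8) ℤ_[p])))
    (A B : Matrix (Fin 2) (Fin 2) (ZMod p)) : Continuous (hfun p A B) := by
  have h1 : Continuous (fun (u : GL (Fin 2) (MvPowerSeries (Fin 8) ℤ_[p]))
      (i : Fin 8) => Dsl p i u) := continuous_pi fun i => continuous_Dsl p hadic i
  exact (continuous_of_discreteTopology
    (f := fun d : Fin 8 → Matrix (Fin 2) (Fin 2) (ZMod p) =>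
      ∑ i : Fin 8, wvec p A B i • d i)).comp h1

end Topology

end Stmt16Aux

set_option maxHeartbeats 1000000 in
/-- Let `p ≠ 2, 3` and `G = P ⋊ S₃` the profinite group constructed from the
closed subgroup `P ⊆ Γ(ℤ_p⟦X₁,…,Y₄⟧)` topologically generated by the `S₃`-conjugates of
`X = 1 + (Xᵢ)` and `Y = 1 + (Yᵢ)`, with `ρ̄ : G ↠ S₃ → GL₂(𝔽_p)` the composition of the
projection with the standard representation. Then `dim H¹(G, Ad ρ̄) = 8`. -/
theorem stmt_16 (p : ℕ) [Fact p.Prime] (hp2 : p ≠ 2) (hp3 : p ≠ 3)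
    [TopologicalSpace (MvPowerSeries (Fin 8) ℤ_[p])]
    [IsTopologicalRing (MvPowerSeries (Fin 8) ℤ_[p])]
    (hadic : IsAdic (maximalIdeal (MvPowerSeries (Fin 8) ℤ_[p])))
    -- an embedding `σ` of `S₃` into `GL₂(ℤ_p)` lifting the standard residual representation
    (σZ : Equiv.Perm (Fin 3) →* GL (Fin 2) ℤ_[p]) (hσinj : Function.Injective σZ)
    (ρstd : Equiv.Perm (Fin 3) →* GL (Fin 2) (ZMod p)) (hstdinj : Function.Injective ρstd)
    (hσlift : (Matrix.GeneralLinearGroup.map (PadicInt.toZMod (p := p))).comp σZ = ρstd)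
    -- the elements `X = 1 + (Xᵢ)` and `Y = 1 + (Yᵢ)`
    (Xu Yu : GL (Fin 2) (MvPowerSeries (Fin 8) ℤ_[p]))
    (hXu : (Xu : Matrix (Fin 2) (Fin 2) (MvPowerSeries (Fin 8) ℤ_[p])) =
      1 + Matrix.of ![![MvPowerSeries.X 0, MvPowerSeries.X 1],
        ![MvPowerSeries.X 2, MvPowerSeries.X 3]])
    (hYu : (Yu : Matrix (Fin 2) (Fin 2) (MvPowerSeries (Fin 8) ℤ_[p])) =
      1 + Matrix.of ![![MvPowerSeries.X 4, MvPowerSeries.X 5],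
        ![MvPowerSeries.X 6, MvPowerSeries.X 7]])
    -- `P`: the closed subgroup topologically generated by the `S₃`-conjugates of `X` and `Y`
    (P : Subgroup (GL (Fin 2) (MvPowerSeries (Fin 8) ℤ_[p])))
    (hP : P = (Subgroup.closure
      {g | ∃ a : Equiv.Perm (Fin 3),
        g = sigmaRcal p σZ a * Xu * (sigmaRcal p σZ a)⁻¹ ∨
        g = sigmaRcal p σZ a * Yu * (sigmaRcal p σZ a)⁻¹}).topologicalClosure)
    -- the action of `S₃` on `P` by conjugation via `σ`, and `G = P ⋊ S₃`
    (φ : Equiv.Perm (Fin 3) →* MulAut ↥P)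
    (hφ : ∀ (a : Equiv.Perm (Fin 3)) (x : ↥P),
      ((φ a x : ↥P) : GL (Fin 2) (MvPowerSeries (Fin 8) ℤ_[p])) =
        sigmaRcal p σZ a * x * (sigmaRcal p σZ a)⁻¹) :
    Module.finrank (ZMod p)
      (Hcont (↥P ⋊[φ] Equiv.Perm (Fin 3)) (Matrix (Fin 2) (Fin 2) (ZMod p))
        (adGL (ρstd.comp (SemidirectProduct.rightHom (φ := φ)))) 1) = 8 := by
  classical
  -- generators lie in `P`
  have hgenX : ∀ a : Equiv.Perm (Fin 3),
      sigmaRcal p σZ a * Xu * (sigmaRcal p σZ a)⁻¹ ∈ P := fun a => by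
    rw [hP]
    exact Subgroup.le_topologicalClosure _ (Subgroup.subset_closure ⟨a, Or.inl rfl⟩)
  have hgenY : ∀ a : Equiv.Perm (Fin 3),
      sigmaRcal p σZ a * Yu * (sigmaRcal p σZ a)⁻¹ ∈ P := fun a => by
    rw [hP]
    exact Subgroup.le_topologicalClosure _ (Subgroup.subset_closure ⟨a, Or.inr rfl⟩)
  have hXmem : Xu ∈ P := by have h := hgenX 1; simpa using h
  have hYmem : Yu ∈ P := by have h := hgenY 1; simpa using h
  -- `P` is contained in the kernel of the mod-`(m,p)` reduction
  have hXz : Stmt16Aux.Pzero p Xu = 1 := by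
    show (Stmt16Aux.pizero p).mapMatrix
      (Xu : Matrix (Fin 2) (Fin 2) (MvPowerSeries (Fin 8) ℤ_[p])) = 1
    rw [hXu, _root_.map_add, _root_.map_one]
    have h0 : (Stmt16Aux.pizero p).mapMatrix
        (Matrix.of ![![MvPowerSeries.X 0, MvPowerSeries.X 1],
          ![MvPowerSeries.X 2, MvPowerSeries.X 3]]) = 0 := by
      ext j k
      fin_cases j <;> fin_cases k <;>
        simp [Stmt16Aux.pizero, MvPowerSeries.constantCoeff_X]
    rw [h0, add_zero]
  have hYz : Stmt16Aux.Pzero p Yu = 1 := by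
    show (Stmt16Aux.pizero p).mapMatrix
      (Yu : Matrix (Fin 2) (Fin 2) (MvPowerSeries (Fin 8) ℤ_[p])) = 1
    rw [hYu, _root_.map_add, _root_.map_one]
    have h0 : (Stmt16Aux.pizero p).mapMatrix
        (Matrix.of ![![MvPowerSeries.X 4, MvPowerSeries.X 5],
          ![MvPowerSeries.X 6, MvPowerSeries.X 7]]) = 0 := by
      ext j k
      fin_cases j <;> fin_cases k <;>
        simp [Stmt16Aux.pizero, MvPowerSeries.constantCoeff_X]
    rw [h0, add_zero]
  have hPzero : ∀ u : GL (Fin 2) (MvPowerSeries (Fin 8) ℤ_[p]), u ∈ P →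
      Stmt16Aux.Pzero p u = 1 := by
    set Pi0 : GL (Fin 2) (MvPowerSeries (Fin 8) ℤ_[p]) →* (Matrix (Fin 2) (Fin 2) (ZMod p))ˣ :=
      Units.map ((RingHom.mapMatrix (Stmt16Aux.pizero p)).toMonoidHom) with hPi0
    have hvalPi : ∀ u : GL (Fin 2) (MvPowerSeries (Fin 8) ℤ_[p]),
        ((Pi0 u : (Matrix (Fin 2) (Fin 2) (ZMod p))ˣ) : Matrix (Fin 2) (Fin 2) (ZMod p))
          = Stmt16Aux.Pzero p u := fun u => rfl
    have hkerc : IsClosed ((MonoidHom.ker Pi0 : Subgroup _) :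
        Set (GL (Fin 2) (MvPowerSeries (Fin 8) ℤ_[p]))) := by
      have heq : ((MonoidHom.ker Pi0 : Subgroup _) :
          Set (GL (Fin 2) (MvPowerSeries (Fin 8) ℤ_[p])))
          = Stmt16Aux.Pzero p ⁻¹' {1} := by
        ext u
        simp only [SetLike.mem_coe, MonoidHom.mem_ker, Set.mem_preimage, Set.mem_singleton_iff]
        constructor
        · intro h
          rw [← hvalPi u, h, Units.val_one]
        · intro h
          apply Units.ext
          rw [hvalPi u, h, Units.val_one]
      rw [heq]
      exact IsClosed.preimage (Stmt16Aux.continuous_Pzero p hadic) (isClosed_discrete _)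
    have hXker : Pi0 Xu = 1 := Units.ext (by rw [hvalPi, hXz, Units.val_one])
    have hYker : Pi0 Yu = 1 := Units.ext (by rw [hvalPi, hYz, Units.val_one])
    have hle : P ≤ MonoidHom.ker Pi0 := by
      rw [hP]
      refine Subgroup.topologicalClosure_minimal _ ?_ hkerc
      rw [Subgroup.closure_le]
      rintro g ⟨a, (rfl | rfl)⟩ <;>
        simp [MonoidHom.mem_ker, _root_.map_mul, _root_.map_inv, hXker, hYker]
    intro u hu
    have h := hle hu
    rw [MonoidHom.mem_ker] at h
    rw [← hvalPi u, h, Units.val_one]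
  -- abbreviation for the representation
  set ρb := adGL (ρstd.comp (SemidirectProduct.rightHom (φ := φ))) with hρbdef
  have hρeq : ∀ (x : ↥P ⋊[φ] Equiv.Perm (Fin 3)) (W : Matrix (Fin 2) (Fin 2) (ZMod p)),
      ρb x W = ((ρstd x.right : GL (Fin 2) (ZMod p)) : Matrix (Fin 2) (Fin 2) (ZMod p)) * W *
        (((ρstd x.right)⁻¹ : GL (Fin 2) (ZMod p)) : Matrix (Fin 2) (Fin 2) (ZMod p)) :=
    fun x W => rfl
  have hρinl : ∀ (n : ↥P) (W : Matrix (Fin 2) (Fin 2) (ZMod p)),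
      ρb (SemidirectProduct.inl n) W = W := by
    intro n W
    rw [hρeq]
    have : (SemidirectProduct.inl n : ↥P ⋊[φ] Equiv.Perm (Fin 3)).right = 1 := rfl
    rw [this]
    simp
  have hproj : Continuous (fun x : ↥P ⋊[φ] Equiv.Perm (Fin 3) => (x.left, x.right)) :=
    continuous_induced_dom
  have hleft : Continuous (fun x : ↥P ⋊[φ] Equiv.Perm (Fin 3) => x.left) := hproj.fst
  have hright : Continuous (fun x : ↥P ⋊[φ] Equiv.Perm (Fin 3) => x.right) := hproj.snd
  -- the explicitly constructed cocycles
  have hcocmem : ∀ A B : Matrix (Fin 2) (Fin 2) (ZMod p),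
      (fun g : Fin 1 → (↥P ⋊[φ] Equiv.Perm (Fin 3)) =>
        Stmt16Aux.hfun p A B (((g 0).left : ↥P) : GL (Fin 2) (MvPowerSeries (Fin 8) ℤ_[p]))) ∈
        cocycles (↥P ⋊[φ] Equiv.Perm (Fin 3)) (Matrix (Fin 2) (Fin 2) (ZMod p)) ρb 1 := by
    intro A B
    constructor
    · have h1 : Continuous (fun x : ↥P ⋊[φ] Equiv.Perm (Fin 3) =>
          ((x.left : ↥P) : GL (Fin 2) (MvPowerSeries (Fin 8) ℤ_[p]))) :=
        continuous_subtype_val.comp hleft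
      exact (Stmt16Aux.continuous_hfun p hadic A B).comp (h1.comp (continuous_apply 0))
    · funext g
      simp only [Stmt16Aux.dmap_one_apply, SemidirectProduct.mul_left, Subgroup.coe_mul,
        Pi.zero_apply]
      have hm := Stmt16Aux.hfun_mul p A B
        (((g 0).left : ↥P) : GL (Fin 2) (MvPowerSeries (Fin 8) ℤ_[p]))
        (((φ (g 0).right (g 1).left : ↥P)) : GL (Fin 2) (MvPowerSeries (Fin 8) ℤ_[p]))
        (hPzero _ (g 0).left.2) (hPzero _ (φ (g 0).right (g 1).left).2)
      rw [hm, hφ (g 0).right (g 1).left,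
        Stmt16Aux.hfun_conj p σZ ρstd hσlift A B ((g 0).right), hρeq (g 0)]
      abel
  -- the evaluation map on cocycles
  let ev : (cocycles (↥P ⋊[φ] Equiv.Perm (Fin 3)) (Matrix (Fin 2) (Fin 2) (ZMod p)) ρb 1)
      →ₗ[ZMod p]
      (Matrix (Fin 2) (Fin 2) (ZMod p) × Matrix (Fin 2) (Fin 2) (ZMod p)) :=
    { toFun := fun f => (f.1 (fun _ => SemidirectProduct.inl ⟨Xu, hXmem⟩),
        f.1 (fun _ => SemidirectProduct.inl ⟨Yu, hYmem⟩))
      map_add' := fun f g => rfl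
      map_smul' := fun c f => rfl }
  set Bc := Submodule.comap
    (cocycles (↥P ⋊[φ] Equiv.Perm (Fin 3)) (Matrix (Fin 2) (Fin 2) (ZMod p)) ρb 1).subtype
    (coboundaries (↥P ⋊[φ] Equiv.Perm (Fin 3)) (Matrix (Fin 2) (Fin 2) (ZMod p)) ρb 1)
    with hBc
  have hBle : Bc ≤ LinearMap.ker ev := by
    rintro ⟨f, hf⟩ hmem
    have hmem' : f ∈ coboundaries (↥P ⋊[φ] Equiv.Perm (Fin 3))
        (Matrix (Fin 2) (Fin 2) (ZMod p)) ρb 1 := hmem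
    obtain ⟨h, hc, hd⟩ := hmem'
    rw [LinearMap.mem_ker]
    have hz : ∀ n : ↥P,
        f (fun _ => (SemidirectProduct.inl n : ↥P ⋊[φ] Equiv.Perm (Fin 3))) = 0 := by
      intro n
      rw [← hd]
      simp only [Stmt16Aux.dmap_zero_apply]
      rw [hρinl]
      exact sub_self _
    exact Prod.ext_iff.mpr ⟨hz _, hz _⟩
  have hker_le : LinearMap.ker ev ≤ Bc := by
    rintro ⟨f, hf⟩ hk
    rw [LinearMap.mem_ker] at hk
    have hkX : f (fun _ => (SemidirectProduct.inl ⟨Xu, hXmem⟩ :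
        ↥P ⋊[φ] Equiv.Perm (Fin 3))) = 0 := congrArg Prod.fst hk
    have hkY : f (fun _ => (SemidirectProduct.inl ⟨Yu, hYmem⟩ :
        ↥P ⋊[φ] Equiv.Perm (Fin 3))) = 0 := congrArg Prod.snd hk
    obtain ⟨hfc, hfd⟩ := hf
    have hco : ∀ x y : ↥P ⋊[φ] Equiv.Perm (Fin 3),
        f (fun _ => x * y) = ρb x (f fun _ => y) + f (fun _ => x) := by
      intro x y
      have h0 := congrFun hfd ![x, y]
      rw [Stmt16Aux.dmap_one_apply] at h0
      simp only [Matrix.cons_val_zero, Matrix.cons_val_one, Matrix.head_cons,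
        Pi.zero_apply] at h0
      rw [sub_add_eq_add_sub, sub_eq_zero] at h0
      exact h0.symm
    have hF1 : f (fun _ => (1 : ↥P ⋊[φ] Equiv.Perm (Fin 3))) = 0 := by
      have h0 := hco 1 1
      rw [mul_one] at h0
      have h1 : f (fun _ => (1 : ↥P ⋊[φ] Equiv.Perm (Fin 3))) =
          f (fun _ => (1 : ↥P ⋊[φ] Equiv.Perm (Fin 3))) +
          f (fun _ => (1 : ↥P ⋊[φ] Equiv.Perm (Fin 3))) := by
        simpa using h0
      exact right_eq_add.mp h1
    have h6 : (6 : ZMod p) ≠ 0 := by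
      have hp : p.Prime := Fact.out
      intro h
      have h' : ((6 : ℕ) : ZMod p) = 0 := by exact_mod_cast h
      rw [ZMod.natCast_eq_zero_iff] at h'
      have h'' : p ∣ 2 * 3 := by norm_num; exact h'
      rcases (Nat.Prime.dvd_mul hp).mp h'' with h2 | h3
      · exact hp2 ((Nat.prime_dvd_prime_iff_eq hp Nat.prime_two).mp h2)
      · exact hp3 ((Nat.prime_dvd_prime_iff_eq hp Nat.prime_three).mp h3)
    have hcard : Fintype.card (Equiv.Perm (Fin 3)) = 6 := by
      simp [Fintype.card_perm]
      rfl
    set Sm := ∑ b : Equiv.Perm (Fin 3),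
      f (fun _ => (SemidirectProduct.inr b : ↥P ⋊[φ] Equiv.Perm (Fin 3))) with hSm
    set m0 := -((6 : ZMod p)⁻¹ • Sm) with hm0
    have hcS : ∀ a : Equiv.Perm (Fin 3),
        f (fun _ => (SemidirectProduct.inr a : ↥P ⋊[φ] Equiv.Perm (Fin 3))) =
          ρb (SemidirectProduct.inr a) m0 - m0 := by
      intro a
      have h1 := Equiv.sum_comp (Equiv.mulLeft a) (fun b => f (fun _ =>
        (SemidirectProduct.inr b : ↥P ⋊[φ] Equiv.Perm (Fin 3))))
      simp only [Equiv.coe_mulLeft] at h1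
      have hsum : Sm = ρb (SemidirectProduct.inr a) Sm +
          (6 : ZMod p) • f (fun _ => (SemidirectProduct.inr a :
            ↥P ⋊[φ] Equiv.Perm (Fin 3))) := by
        calc Sm = ∑ b : Equiv.Perm (Fin 3), f (fun _ => (SemidirectProduct.inr (a * b) :
              ↥P ⋊[φ] Equiv.Perm (Fin 3))) := by rw [hSm, ← h1]
        _ = ∑ b : Equiv.Perm (Fin 3), (ρb (SemidirectProduct.inr a)
              (f (fun _ => (SemidirectProduct.inr b : ↥P ⋊[φ] Equiv.Perm (Fin 3)))) +
              f (fun _ => (SemidirectProduct.inr a : ↥P ⋊[φ] Equiv.Perm (Fin 3)))) := by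
            refine Finset.sum_congr rfl fun b _ => ?_
            rw [show (SemidirectProduct.inr (a * b) : ↥P ⋊[φ] Equiv.Perm (Fin 3)) =
              SemidirectProduct.inr a * SemidirectProduct.inr b from map_mul _ _ _]
            exact hco _ _
        _ = ρb (SemidirectProduct.inr a) Sm + (6 : ZMod p) • f (fun _ =>
              (SemidirectProduct.inr a : ↥P ⋊[φ] Equiv.Perm (Fin 3))) := by
            rw [Finset.sum_add_distrib]
            congr 1
            · rw [hSm, ← _root_.map_sum]
            · rw [Finset.sum_const, Finset.card_univ, hcard,
                ← Nat.cast_smul_eq_nsmul (ZMod p)]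
              norm_num
      have h2 : Sm - ρb (SemidirectProduct.inr a) Sm = (6 : ZMod p) • f (fun _ =>
          (SemidirectProduct.inr a : ↥P ⋊[φ] Equiv.Perm (Fin 3))) :=
        sub_eq_of_eq_add' hsum
      have h3 : f (fun _ => (SemidirectProduct.inr a : ↥P ⋊[φ] Equiv.Perm (Fin 3))) =
          (6 : ZMod p)⁻¹ • (Sm - ρb (SemidirectProduct.inr a) Sm) := by
        rw [h2, smul_smul, inv_mul_cancel₀ h6, one_smul]
      rw [h3, hm0]
      rw [_root_.map_neg, _root_.map_smul, smul_sub]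
      abel
    set F' : (↥P ⋊[φ] Equiv.Perm (Fin 3)) → Matrix (Fin 2) (Fin 2) (ZMod p) :=
      fun x => f (fun _ => x) - (ρb x m0 - m0) with hF'
    have hco' : ∀ x y : ↥P ⋊[φ] Equiv.Perm (Fin 3),
        F' (x * y) = ρb x (F' y) + F' x := by
      intro x y
      simp only [hF', hco, map_sub, _root_.map_mul, Module.End.mul_apply]
      abel
    have hF'1 : F' 1 = 0 := by
      simp only [hF']
      rw [hF1, _root_.map_one]
      simp
    have hF'inr : ∀ a : Equiv.Perm (Fin 3),
        F' (SemidirectProduct.inr a) = 0 := by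
      intro a
      simp only [hF']
      rw [hcS a]
      exact sub_self _
    have hF'inv : ∀ x : ↥P ⋊[φ] Equiv.Perm (Fin 3), F' x⁻¹ = -(ρb x⁻¹ (F' x)) := by
      intro x
      have h0 := hco' x⁻¹ x
      rw [inv_mul_cancel, hF'1] at h0
      exact eq_neg_of_add_eq_zero_right h0.symm
    have hF'conj : ∀ (a : Equiv.Perm (Fin 3)) (n : ↥P),
        F' (SemidirectProduct.inl (φ a n)) = ρb (SemidirectProduct.inr a)
          (F' (SemidirectProduct.inl n)) := by
      intro a n
      simp only [SemidirectProduct.inl_aut, hco', hF'inr, map_zero, add_zero, zero_add]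
    have hPc : IsClosed (P : Set (GL (Fin 2) (MvPowerSeries (Fin 8) ℤ_[p]))) := by
      rw [hP]; exact Subgroup.isClosed_topologicalClosure _
    have hcontF' : Continuous fun n : ↥P => F' (SemidirectProduct.inl n) := by
      haveI : ContinuousSub (Matrix (Fin 2) (Fin 2) (ZMod p)) := ⟨continuous_of_discreteTopology⟩
      have hinl : Continuous (fun n : ↥P =>
          (SemidirectProduct.inl n : ↥P ⋊[φ] Equiv.Perm (Fin 3))) := by
        apply continuous_induced_rng.mpr
        exact (continuous_id.prodMk continuous_const :
          Continuous fun n : ↥P => (n, (1 : Equiv.Perm (Fin 3))))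
      have hc1 : Continuous (fun x : ↥P ⋊[φ] Equiv.Perm (Fin 3) => f (fun _ => x)) :=
        hfc.comp (continuous_pi fun _ => continuous_id)
      have hc2 : Continuous (fun x : ↥P ⋊[φ] Equiv.Perm (Fin 3) => ρb x m0) := by
        have heq : (fun x : ↥P ⋊[φ] Equiv.Perm (Fin 3) => ρb x m0) =
            (fun a : Equiv.Perm (Fin 3) =>
              ρb (SemidirectProduct.inr a) m0) ∘ (fun x => x.right) := rfl
        rw [heq]
        exact continuous_of_discreteTopology.comp hright
      exact ((hc1.sub (hc2.sub continuous_const)).comp hinl)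
    let KG : Subgroup (GL (Fin 2) (MvPowerSeries (Fin 8) ℤ_[p])) :=
      { carrier := {u | ∃ hu : u ∈ P, F' (SemidirectProduct.inl ⟨u, hu⟩) = 0}
        one_mem' := ⟨P.one_mem, by
          rw [show ((⟨1, P.one_mem⟩ : ↥P)) = 1 from rfl, _root_.map_one]
          exact hF'1⟩
        mul_mem' := by
          intro u v hu' hv'
          obtain ⟨hu, hu0⟩ := hu'
          obtain ⟨hv, hv0⟩ := hv'
          refine ⟨P.mul_mem hu hv, ?_⟩
          rw [show ((⟨u * v, P.mul_mem hu hv⟩ : ↥P)) = (⟨u, hu⟩ : ↥P) * (⟨v, hv⟩ : ↥P)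
            from rfl, _root_.map_mul, hco', hu0, hv0, map_zero, add_zero]
        inv_mem' := by
          intro u hu'
          obtain ⟨hu, hu0⟩ := hu'
          refine ⟨P.inv_mem hu, ?_⟩
          rw [show ((⟨u⁻¹, P.inv_mem hu⟩ : ↥P)) = ((⟨u, hu⟩ : ↥P))⁻¹ from rfl,
            _root_.map_inv, hF'inv, hu0, map_zero, neg_zero] }
    have hXf : F' (SemidirectProduct.inl ⟨Xu, hXmem⟩) = 0 := by
      simp only [hF']
      rw [hρinl, sub_self, sub_zero, hkX]
    have hYf : F' (SemidirectProduct.inl ⟨Yu, hYmem⟩) = 0 := by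
      simp only [hF']
      rw [hρinl, sub_self, sub_zero, hkY]
    have hPKG : P ≤ KG := by
      rw [hP]
      refine Subgroup.topologicalClosure_minimal _ ?_ ?_
      · rw [Subgroup.closure_le]
        rintro g ⟨a, (rfl | rfl)⟩
        · refine ⟨hgenX a, ?_⟩
          rw [show ((⟨_, hgenX a⟩ : ↥P)) = φ a ⟨Xu, hXmem⟩
            from Subtype.ext (hφ a ⟨Xu, hXmem⟩).symm]
          rw [hF'conj, hXf, map_zero]
        · refine ⟨hgenY a, ?_⟩
          rw [show ((⟨_, hgenY a⟩ : ↥P)) = φ a ⟨Yu, hYmem⟩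
            from Subtype.ext (hφ a ⟨Yu, hYmem⟩).symm]
          rw [hF'conj, hYf, map_zero]
      · have himg : (KG : Set (GL (Fin 2) (MvPowerSeries (Fin 8) ℤ_[p]))) =
            (Subtype.val : ↥P → GL (Fin 2) (MvPowerSeries (Fin 8) ℤ_[p])) ''
              {n : ↥P | F' (SemidirectProduct.inl n) = 0} := by
          ext u
          constructor
          · rintro ⟨hu, h0⟩
            exact ⟨⟨u, hu⟩, h0, rfl⟩
          · rintro ⟨n, hn, rfl⟩
            exact ⟨n.2, by rwa [Subtype.coe_eta]⟩
        have hpre : IsClosed {n : ↥P | F' (SemidirectProduct.inl n) = 0} := by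
          have hcl := IsClosed.preimage hcontF'
            (isClosed_discrete ({0} : Set (Matrix (Fin 2) (Fin 2) (ZMod p))))
          exact hcl
        show IsClosed (KG : Set (GL (Fin 2) (MvPowerSeries (Fin 8) ℤ_[p])))
        rw [himg]
        exact hPc.isClosedEmbedding_subtypeVal.isClosedMap _ hpre
    have hF'P : ∀ n : ↥P, F' (SemidirectProduct.inl n) = 0 := by
      intro n
      obtain ⟨hu, h0⟩ := hPKG n.2
      rwa [Subtype.coe_eta] at h0
    have hF'all : ∀ x : ↥P ⋊[φ] Equiv.Perm (Fin 3), F' x = 0 := by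
      intro x
      rw [← SemidirectProduct.inl_left_mul_inr_right x, hco', hF'inr, map_zero, hF'P,
        add_zero]
    show f ∈ coboundaries (↥P ⋊[φ] Equiv.Perm (Fin 3))
      (Matrix (Fin 2) (Fin 2) (ZMod p)) ρb 1
    refine ⟨fun _ => m0, continuous_const, ?_⟩
    funext g
    rw [Stmt16Aux.dmap_zero_apply]
    have hg : g = fun _ => g 0 := funext fun j => by
      have hj : j = 0 := Subsingleton.elim (α := Fin 1) j 0
      rw [hj]
    have h1 : f (fun _ => g 0) = ρb (g 0) m0 - m0 := sub_eq_zero.mp (hF'all (g 0))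
    conv_rhs => rw [hg]
    rw [h1]
  have hinj : Function.Injective (Submodule.liftQ Bc ev hBle) := by
    rw [← LinearMap.ker_eq_bot]
    exact Submodule.ker_liftQ_eq_bot _ _ _ hker_le
  have hsurj : Function.Surjective (Submodule.liftQ Bc ev hBle) := by
    rintro ⟨A, B⟩
    refine ⟨Submodule.Quotient.mk ⟨_, hcocmem A B⟩, ?_⟩
    rw [Submodule.liftQ_apply]
    show (Stmt16Aux.hfun p A B Xu, Stmt16Aux.hfun p A B Yu) = (A, B)
    rw [Stmt16Aux.hfun_X p A B Xu hXu, Stmt16Aux.hfun_Y p A B Yu hYu]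
  have hrk : Module.finrank (ZMod p)
      (Matrix (Fin 2) (Fin 2) (ZMod p) × Matrix (Fin 2) (Fin 2) (ZMod p)) = 8 := by
    rw [Module.finrank_prod, Module.finrank_matrix]
    simp
  exact ((LinearEquiv.ofBijective (Submodule.liftQ Bc ev hBle)
    ⟨hinj, hsurj⟩).finrank_eq).trans hrk


end
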